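/- Let R be a commutative ring of characteristic 2 and let A₁, A₂, B₁, B₂, C₁, C₂, D₁, D₂ be k×k circulant matrices over R. Define Ã = (A₁, A₂; A₂ᵀ, A₁ᵀ) and similarly B̃, C̃, D̃ (each 2k×2k), and let Ω = I₂ ⊗ CIR(Ã, B̃) + J₂ ⊗ CIR(C̃, D̃), an 8k×8k matrix, where CIR(X,Y) denotes the block circulant matrix (X, Y; Y, X), I₂ the 2×2 identity, and J₂ the 2×2 exchange matrix. Then Ω·Ωᵀ = I_{8k} if and only if: Σ over pairs of A₁A₁ᵀ+A₂A₂ᵀ+B₁B₁ᵀ+B₂B₂ᵀ+C₁C₁ᵀ+C₂C₂ᵀ+D₁D₁ᵀ+D₂D₂ᵀ = I_k, A₁B₁ᵀ+A₂B₂ᵀ+B₁A₁ᵀ+B₂A₂ᵀ+C₁D₁ᵀ+C₂D₂ᵀ+D₁C₁ᵀ+D₂C₂ᵀ = 0, A₁C₁ᵀ+A₂C₂ᵀ+B₁D₁ᵀ+B₂D₂ᵀ+C₁A₁ᵀ+C₂A₂ᵀ+D₁B₁ᵀ+D₂B₂ᵀ = 0, and A₁D₁ᵀ+A₂D₂ᵀ+B₁C₁ᵀ+B₂C₂ᵀ+C₁B₁ᵀ+C₂B₂ᵀ+D₁A₁ᵀ+D₂A₂ᵀ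 = 0. -/
import Mathlib


open Matrix

/-- The cyclic right-shift permutation matrix `P = (0, I_{n-1}; 1, 0)`. -/
def shiftP (n : ℕ) [NeZero n] (R : Type*) [CommRing R] : Matrix (Fin n) (Fin n) R :=
  Matrix.of fun i j => if j = i + 1 then (1 : R) else 0

/-- The circulant matrix `cir (b₀, …, b_{n-1})`, whose `(i, j)` entry is `b_{(j-i) mod n}`. -/
def cir {R : Type*} [CommRing R] {n : ℕ} (b : Fin n → R) : Matrix (Fin n) (Fin n) R :=
  Matrix.of fun i j => b (j - i)

open Kronecker

/-- The 2×2 exchange matrix `J₂`. -/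
def J2 (R : Type*) [CommRing R] : Matrix (Fin 2) (Fin 2) R := !![0, 1; 1, 0]

section Aux
variable {R : Type*} [CommRing R]

lemma cir_eq_circulant {k : ℕ} (b : Fin k → R) :
    cir b = Matrix.circulant fun i => b (-i) := by
  cases k with
  | zero => ext i j; exact i.elim0
  | succ n =>
    ext i j
    simp only [cir, Matrix.circulant_apply, Matrix.of_apply, neg_sub]

/-- circulant predicate -/
def Ic {k : ℕ} (X : Matrix (Fin k) (Fin k) R) : Prop := ∃ v, X = Matrix.circulant v

lemma Ic.transpose {k : ℕ} {X : Matrix (Fin k) (Fin k) R} (h : Ic X) : Ic Xᵀ := by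
  obtain ⟨v, rfl⟩ := h
  exact ⟨_, Matrix.Fin.transpose_circulant v⟩

lemma Ic.comm {k : ℕ} {X Y : Matrix (Fin k) (Fin k) R} (hX : Ic X) (hY : Ic Y) :
    X * Y = Y * X := by
  obtain ⟨v, rfl⟩ := hX; obtain ⟨w, rfl⟩ := hY
  exact Matrix.Fin.circulant_mul_comm v w

lemma J2_transpose : (J2 R)ᵀ = J2 R := by
  ext i j; fin_cases i <;> fin_cases j <;> simp [J2]

lemma J2_mul_J2 : J2 R * J2 R = 1 := by
  ext i j
  fin_cases i <;> fin_cases j <;>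
    simp [J2, Matrix.mul_apply, Fin.sum_univ_two, Matrix.one_apply]

lemma step1 {m : Type*} [Fintype m] [DecidableEq m] (P Q : Matrix m m R) :
    ((1 : Matrix (Fin 2) (Fin 2) R) ⊗ₖ P + J2 R ⊗ₖ Q) *
      ((1 : Matrix (Fin 2) (Fin 2) R) ⊗ₖ P + J2 R ⊗ₖ Q)ᵀ =
    (1 : Matrix (Fin 2) (Fin 2) R) ⊗ₖ (P * Pᵀ + Q * Qᵀ) + J2 R ⊗ₖ (P * Qᵀ + Q * Pᵀ) := by
  rw [Matrix.transpose_add, ← Matrix.kroneckerMap_transpose, ← Matrix.kroneckerMap_transpose,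
    Matrix.transpose_one, J2_transpose]
  simp only [Matrix.add_mul, Matrix.mul_add, ← Matrix.mul_kronecker_mul, Matrix.one_mul,
    Matrix.mul_one, J2_mul_J2, Matrix.kroneckerMap_add_right, Matrix.kronecker_add,
    Matrix.add_kronecker]
  abel

lemma kron_eq_one_iff {m : Type*} [Fintype m] [DecidableEq m] (X Y : Matrix m m R) :
    (1 : Matrix (Fin 2) (Fin 2) R) ⊗ₖ X + J2 R ⊗ₖ Y = 1 ↔ X = 1 ∧ Y = 0 := by
  constructor
  · intro h
    constructor
    · ext a b
      have := congrFun (congrFun h (0, a)) (0, b)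
      simpa [Matrix.kroneckerMap_apply, J2, Matrix.one_apply, Prod.ext_iff] using this
    · ext a b
      have := congrFun (congrFun h (0, a)) (1, b)
      simpa [Matrix.kroneckerMap_apply, J2, Matrix.one_apply, Prod.ext_iff] using this
  · rintro ⟨rfl, rfl⟩
    simp [Matrix.one_kronecker_one]

lemma fromBlocks_eq_one_iff {n m : Type*} [DecidableEq n] [DecidableEq m]
    (W : Matrix n n R) (X : Matrix n m R) (Y : Matrix m n R) (Z : Matrix m m R) :
    Matrix.fromBlocks W X Y Z = 1 ↔ W = 1 ∧ X = 0 ∧ Y = 0 ∧ Z = 1 := by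
  rw [← Matrix.fromBlocks_one, Matrix.fromBlocks_inj]

lemma fromBlocks_eq_zero_iff {n m : Type*}
    (W : Matrix n n R) (X : Matrix n m R) (Y : Matrix m n R) (Z : Matrix m m R) :
    Matrix.fromBlocks W X Y Z = 0 ↔ W = 0 ∧ X = 0 ∧ Y = 0 ∧ Z = 0 := by
  rw [← Matrix.fromBlocks_zero, Matrix.fromBlocks_inj]

lemma mat_two_nsmul [CharP R 2] {m n : Type*} (M : Matrix m n R) : (2 : ℕ) • M = 0 := by
  ext i j
  exact CharTwo.two_nsmul _

lemma mat_two_zsmul [CharP R 2] {m n : Type*} (M : Matrix m n R) : (2 : ℤ) • M = 0 := by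
  ext i j
  exact CharTwo.two_zsmul _

lemma mat_add_self [CharP R 2] {m n : Type*} (M : Matrix m n R) : M + M = 0 := by
  ext i j
  exact CharTwo.add_self_eq_zero _

end Aux

/-- For `k×k` circulant matrices `A₁, A₂, B₁, B₂, C₁, C₂, D₁, D₂` over a commutative ring of
characteristic 2, with `Ã = (A₁ A₂; A₂ᵀ A₁ᵀ)` (similarly `B̃, C̃, D̃`) and
`Ω = I₂ ⊗ CIR(Ã, B̃) + J₂ ⊗ CIR(C̃, D̃)`, we have `Ω Ωᵀ = I` iff the four stated conditions
hold. -/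


theorem omega_kronecker_selfdual_iff {R : Type*} [CommRing R] [CharP R 2] {k : ℕ}
    (A₁ A₂ B₁ B₂ C₁ C₂ D₁ D₂ : Matrix (Fin k) (Fin k) R)
    (hA₁ : ∃ a, A₁ = cir a) (hA₂ : ∃ a, A₂ = cir a) (hB₁ : ∃ b, B₁ = cir b)
    (hB₂ : ∃ b, B₂ = cir b) (hC₁ : ∃ c, C₁ = cir c) (hC₂ : ∃ c, C₂ = cir c)
    (hD₁ : ∃ d, D₁ = cir d) (hD₂ : ∃ d, D₂ = cir d) :
    ((1 : Matrix (Fin 2) (Fin 2) R) ⊗ₖ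
        (Matrix.fromBlocks (Matrix.fromBlocks A₁ A₂ A₂ᵀ A₁ᵀ) (Matrix.fromBlocks B₁ B₂ B₂ᵀ B₁ᵀ)
          (Matrix.fromBlocks B₁ B₂ B₂ᵀ B₁ᵀ) (Matrix.fromBlocks A₁ A₂ A₂ᵀ A₁ᵀ)) +
      (J2 R) ⊗ₖ
        (Matrix.fromBlocks (Matrix.fromBlocks C₁ C₂ C₂ᵀ C₁ᵀ) (Matrix.fromBlocks D₁ D₂ D₂ᵀ D₁ᵀ)
          (Matrix.fromBlocks D₁ D₂ D₂ᵀ D₁ᵀ) (Matrix.fromBlocks C₁ C₂ C₂ᵀ C₁ᵀ))) *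
      ((1 : Matrix (Fin 2) (Fin 2) R) ⊗ₖ
        (Matrix.fromBlocks (Matrix.fromBlocks A₁ A₂ A₂ᵀ A₁ᵀ) (Matrix.fromBlocks B₁ B₂ B₂ᵀ B₁ᵀ)
          (Matrix.fromBlocks B₁ B₂ B₂ᵀ B₁ᵀ) (Matrix.fromBlocks A₁ A₂ A₂ᵀ A₁ᵀ)) +
      (J2 R) ⊗ₖ
        (Matrix.fromBlocks (Matrix.fromBlocks C₁ C₂ C₂ᵀ C₁ᵀ) (Matrix.fromBlocks D₁ D₂ D₂ᵀ D₁ᵀ)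
          (Matrix.fromBlocks D₁ D₂ D₂ᵀ D₁ᵀ) (Matrix.fromBlocks C₁ C₂ C₂ᵀ C₁ᵀ)))ᵀ = 1 ↔
    (A₁ * A₁ᵀ + A₂ * A₂ᵀ + B₁ * B₁ᵀ + B₂ * B₂ᵀ + C₁ * C₁ᵀ + C₂ * C₂ᵀ + D₁ * D₁ᵀ + D₂ * D₂ᵀ = 1 ∧
     A₁ * B₁ᵀ + A₂ * B₂ᵀ + B₁ * A₁ᵀ + B₂ * A₂ᵀ + C₁ * D₁ᵀ + C₂ * D₂ᵀ + D₁ * C₁ᵀ + D₂ * C₂ᵀ = 0 ∧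
     A₁ * C₁ᵀ + A₂ * C₂ᵀ + B₁ * D₁ᵀ + B₂ * D₂ᵀ + C₁ * A₁ᵀ + C₂ * A₂ᵀ + D₁ * B₁ᵀ + D₂ * B₂ᵀ = 0 ∧
     A₁ * D₁ᵀ + A₂ * D₂ᵀ + B₁ * C₁ᵀ + B₂ * C₂ᵀ + C₁ * B₁ᵀ + C₂ * B₂ᵀ + D₁ * A₁ᵀ + D₂ * A₂ᵀ = 0) := by
  have cA₁ : Ic A₁ := by obtain ⟨a, h⟩ := hA₁; exact ⟨_, h.trans (cir_eq_circulant a)⟩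
  have cA₂ : Ic A₂ := by obtain ⟨a, h⟩ := hA₂; exact ⟨_, h.trans (cir_eq_circulant a)⟩
  have cB₁ : Ic B₁ := by obtain ⟨a, h⟩ := hB₁; exact ⟨_, h.trans (cir_eq_circulant a)⟩
  have cB₂ : Ic B₂ := by obtain ⟨a, h⟩ := hB₂; exact ⟨_, h.trans (cir_eq_circulant a)⟩
  have cC₁ : Ic C₁ := by obtain ⟨a, h⟩ := hC₁; exact ⟨_, h.trans (cir_eq_circulant a)⟩
  have cC₂ : Ic C₂ := by obtain ⟨a, h⟩ := hC₂; exact ⟨_, h.trans (cir_eq_circulant a)⟩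
  have cD₁ : Ic D₁ := by obtain ⟨a, h⟩ := hD₁; exact ⟨_, h.trans (cir_eq_circulant a)⟩
  have cD₂ : Ic D₂ := by obtain ⟨a, h⟩ := hD₂; exact ⟨_, h.trans (cir_eq_circulant a)⟩
  rw [step1, kron_eq_one_iff]
  simp only [Matrix.fromBlocks_transpose, Matrix.transpose_transpose,
    Matrix.fromBlocks_multiply, Matrix.fromBlocks_add,
    fromBlocks_eq_one_iff, fromBlocks_eq_zero_iff]
  constructor
  · intro h
    refine ⟨?_, ?_, ?_, ?_⟩
    · linear_combination (norm := abel1) h.1.1.1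
    · linear_combination (norm := abel1) h.1.2.1.1
    · linear_combination (norm := abel1) h.2.1.1
    · linear_combination (norm := abel1) h.2.2.1.1
  · rintro ⟨e1, e2, e3, e4⟩
    refine ⟨⟨⟨?_, ?_, ?_, ?_⟩, ⟨?_, ?_, ?_, ?_⟩, ⟨?_, ?_, ?_, ?_⟩, ?_, ?_, ?_, ?_⟩,
      ⟨?_, ?_, ?_, ?_⟩, ⟨?_, ?_, ?_, ?_⟩, ⟨?_, ?_, ?_, ?_⟩, ?_, ?_, ?_, ?_⟩ <;>
      (try simp only [cA₂.comm cA₁, cA₂.transpose.comm cA₁.transpose, cB₁.comm cA₁, cB₁.transpose.comm cA₁.transpose, cB₁.comm cA₂, cB₁.transpose.comm cA₂.transpose, cB₂.comm cA₁, cB₂.transpose.comm cA₁.transpose, cB₂.comm cA₂, cB₂.transpose.comm cA₂.transpose, cB₂.comm cB₁, cB₂.transpose.comm cB₁.transpose, cC₁.comm cA₁, cC₁.transpose.comm cA₁.transpose, cC₁.comm cA₂, cC₁.transpose.comm cA₂.transpose, cC₁.comm cB₁, cC₁.transpose.comm cB₁.transpose, cC₁.comm cB₂, cC₁.transpose.comm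 cB₂.transpose, cC₂.comm cA₁, cC₂.transpose.comm cA₁.transpose, cC₂.comm cA₂, cC₂.transpose.comm cA₂.transpose, cC₂.comm cB₁, cC₂.transpose.comm cB₁.transpose, cC₂.comm cB₂, cC₂.transpose.comm cB₂.transpose, cC₂.comm cC₁, cC₂.transpose.comm cC₁.transpose, cD₁.comm cA₁, cD₁.transpose.comm cA₁.transpose, cD₁.comm cA₂, cD₁.transpose.comm cA₂.transpose, cD₁.comm cB₁, cD₁.transpose.comm cB₁.transpose, cD₁.comm cB₂, cD₁.transpose.comm cB₂.transpose, cD₁.comm cC₁, cD₁.transpose.comm cC₁.transpose, cD₁.comm cC₂, cD₁.transpose.comm cC₂.transpose, cD₂.comm cA₁, cD₂.transpose.comm cA₁.transpose, cD₂.comm cA₂, cD₂.transpose.comm cA₂.transpose, cD₂.comm cB₁, cD₂.transpose.comm cB₁.transpose, cD₂.comm cB₂, cD₂.transpose.comm cB₂.transpose, cD₂.comm cC₁, cD₂.transpose.comm cC₁.transpose, cD₂.comm cC₂, cD₂.transpose.comm cC₂.transpose, cD₂.comm cD₁, cD₂.transpose.comm cD₁.transpose, cA₁.transpose.comm cA₁,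 cA₂.transpose.comm cA₂, cA₁.transpose.comm cB₁, cA₂.transpose.comm cB₂, cA₁.transpose.comm cC₁, cA₂.transpose.comm cC₂, cA₁.transpose.comm cD₁, cA₂.transpose.comm cD₂, cB₁.transpose.comm cA₁, cB₂.transpose.comm cA₂, cB₁.transpose.comm cB₁, cB₂.transpose.comm cB₂, cB₁.transpose.comm cC₁, cB₂.transpose.comm cC₂, cB₁.transpose.comm cD₁, cB₂.transpose.comm cD₂, cC₁.transpose.comm cA₁, cC₂.transpose.comm cA₂, cC₁.transpose.comm cB₁, cC₂.transpose.comm cB₂, cC₁.transpose.comm cC₁, cC₂.transpose.comm cC₂, cC₁.transpose.comm cD₁, cC₂.transpose.comm cD₂, cD₁.transpose.comm cA₁, cD₂.transpose.comm cA₂, cD₁.transpose.comm cB₁, cD₂.transpose.comm cB₂, cD₁.transpose.comm cC₁, cD₂.transpose.comm cC₂, cD₁.transpose.comm cD₁, cD₂.transpose.comm cD₂]) <;>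
      first
        | linear_combination (norm := abel1) e1
        | linear_combination (norm := abel1) e2
        | linear_combination (norm := abel1) e3
        | linear_combination (norm := abel1) e4
        | (abel_nf; simp only [mat_two_nsmul, mat_two_zsmul, add_zero, zero_add])
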